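/- arXiv:1911.04209 — 4 statements merged into one kernel-verified Lean document; each statement's English description precedes it below -/
import Mathlib

section
/- For any real numbers g_s, S with |g_s| ≤ g*, |S| ≤ n·g*, any natural number n ≥ 1, and regularization parameter λ ≥ 0, the difference |((S + g_s)²)/(n + λ + 1) − S²/(n + λ)| is at most 3·g*². -/
/-- Sensitivity bound for the GBDT gain function. -/
theorem gain_sensitivity_bound (gs S gstar lam : ℝ) (n : ℕ) (hn : 1 ≤ n)
    (hgs : |gs| ≤ gstar) (hS : |S| ≤ (n : ℝ) * gstar) (hlam : 0 ≤ lam) :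
    |((S + gs) ^ 2) / ((n : ℝ) + lam + 1) - S ^ 2 / ((n : ℝ) + lam)| ≤ 3 * gstar ^ 2 := by
  have hg0 : 0 ≤ gstar := le_trans (abs_nonneg gs) hgs
  have hn1 : (1:ℝ) ≤ (n:ℝ) := by exact_mod_cast hn
  have hn0 : (0:ℝ) ≤ (n:ℝ) := by linarith
  have hd : 0 < (n:ℝ) + lam := by linarith
  have hd1 : 0 < (n:ℝ) + lam + 1 := by linarith
  obtain ⟨hg1, hg2⟩ := abs_le.mp hgs
  obtain ⟨hS1, hS2⟩ := abs_le.mp hS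
  have hsq : S ^ 2 ≤ ((n:ℝ) * gstar) ^ 2 := sq_le_sq' hS1 hS2
  have hgsq : gs ^ 2 ≤ gstar ^ 2 := sq_le_sq' hg1 hg2
  have hSg : |S * gs| ≤ (n:ℝ) * gstar * gstar := by
    rw [abs_mul]
    exact mul_le_mul hS hgs (abs_nonneg gs) (by positivity)
  obtain ⟨hSg1, hSg2⟩ := abs_le.mp hSg
  rw [div_sub_div _ _ (ne_of_gt hd1) (ne_of_gt hd), abs_div,
    abs_of_pos (mul_pos hd1 hd), div_le_iff₀ (mul_pos hd1 hd), abs_le]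
  have h1 := mul_le_mul_of_nonneg_left hSg2 hd.le
  have h2 := mul_le_mul_of_nonneg_left hSg1 hd.le
  have h3 := mul_le_mul_of_nonneg_left hgsq hd.le
  constructor
  · nlinarith [sq_nonneg S, mul_nonneg (mul_nonneg (sq_nonneg gstar) hn0) hlam,
      mul_nonneg (sq_nonneg gstar) hn0, mul_nonneg (sq_nonneg gstar) (mul_nonneg hlam hlam),
      mul_nonneg (sq_nonneg gstar) hlam]
  · nlinarith [sq_nonneg S, mul_nonneg (mul_nonneg (sq_nonneg gstar) hd.le) hlam,
      mul_nonneg (sq_nonneg gstar) hd.le, mul_nonneg (sq_nonneg gstar) hlam,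
      mul_nonneg (mul_nonneg (sq_nonneg gstar) hn0) hlam]
end

section
/- For any natural number n ≥ 1, real g* ≥ 0, λ ≥ 0, the expression ((n−1)²·g*²)/(n + λ + 1) − (n²·g*²)/(n + λ) has absolute value equal to |(−3n² + (1−2λ)n + λ)/((n + λ + 1)(n + λ))|·g*², and this is at most 3·g*². -/
/-- Worst-case computation in the gain sensitivity proof. -/
theorem gain_worst_case (n : ℕ) (gstar lam : ℝ) (hn : 1 ≤ n) (hg : 0 ≤ gstar) (hlam : 0 ≤ lam) :
    |(((n : ℝ) - 1) ^ 2 * gstar ^ 2) / ((n : ℝ) + lam + 1) -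
        ((n : ℝ) ^ 2 * gstar ^ 2) / ((n : ℝ) + lam)| =
      |(-3 * (n : ℝ) ^ 2 + (1 - 2 * lam) * (n : ℝ) + lam) /
          (((n : ℝ) + lam + 1) * ((n : ℝ) + lam))| * gstar ^ 2 ∧
    |(((n : ℝ) - 1) ^ 2 * gstar ^ 2) / ((n : ℝ) + lam + 1) -
        ((n : ℝ) ^ 2 * gstar ^ 2) / ((n : ℝ) + lam)| ≤ 3 * gstar ^ 2 := by
  have hx : (1 : ℝ) ≤ (n : ℝ) := by exact_mod_cast hn
  have h1 : (0 : ℝ) < (n : ℝ) + lam := by linarith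
  have h2 : (0 : ℝ) < (n : ℝ) + lam + 1 := by linarith
  have key : (((n : ℝ) - 1) ^ 2 * gstar ^ 2) / ((n : ℝ) + lam + 1) -
        ((n : ℝ) ^ 2 * gstar ^ 2) / ((n : ℝ) + lam) =
      ((-3 * (n : ℝ) ^ 2 + (1 - 2 * lam) * (n : ℝ) + lam) /
          (((n : ℝ) + lam + 1) * ((n : ℝ) + lam))) * gstar ^ 2 := by
    field_simp
    ring
  have heq : |(((n : ℝ) - 1) ^ 2 * gstar ^ 2) / ((n : ℝ) + lam + 1) -
        ((n : ℝ) ^ 2 * gstar ^ 2) / ((n : ℝ) + lam)| =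
      |(-3 * (n : ℝ) ^ 2 + (1 - 2 * lam) * (n : ℝ) + lam) /
          (((n : ℝ) + lam + 1) * ((n : ℝ) + lam))| * gstar ^ 2 := by
    rw [key, abs_mul, abs_of_nonneg (sq_nonneg gstar)]
  refine ⟨heq, ?_⟩
  rw [heq]
  have hb : |(-3 * (n : ℝ) ^ 2 + (1 - 2 * lam) * (n : ℝ) + lam) /
      (((n : ℝ) + lam + 1) * ((n : ℝ) + lam))| ≤ 3 := by
    rw [abs_div, div_le_iff₀ (by positivity)]
    rw [abs_of_pos (by positivity : (0:ℝ) < ((n : ℝ) + lam + 1) * ((n : ℝ) + lam))]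
    rw [abs_le]
    constructor <;> nlinarith [sq_nonneg lam, mul_nonneg hlam (le_trans zero_le_one hx), sq_nonneg ((n:ℝ) - 1)]
  calc |(-3 * (n : ℝ) ^ 2 + (1 - 2 * lam) * (n : ℝ) + lam) /
      (((n : ℝ) + lam + 1) * ((n : ℝ) + lam))| * gstar ^ 2 ≤ 3 * gstar ^ 2 :=
    mul_le_mul_of_nonneg_right hb (sq_nonneg gstar)
end

section
/- For any real numbers g_1, …, g_n, g_s all bounded in absolute value by g* ≥ 0, any n ≥ 1, and λ ≥ 0, we have |(Σ_{i=1}^n g_i)/(n + λ) − (Σ_{i=1}^n g_i + g_s)/(n + 1 + λ)| ≤ g*/(1 + λ). -/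
/-- Sensitivity bound for the GBDT leaf value function. -/
theorem leaf_sensitivity_bound (n : ℕ) (g : Fin n → ℝ) (gs gstar lam : ℝ) (hn : 1 ≤ n)
    (hg : ∀ i, |g i| ≤ gstar) (hgs : |gs| ≤ gstar) (hlam : 0 ≤ lam) :
    |(∑ i, g i) / ((n : ℝ) + lam) - ((∑ i, g i) + gs) / ((n : ℝ) + 1 + lam)| ≤
      gstar / (1 + lam) := by
  have hn1 : (1 : ℝ) ≤ n := by exact_mod_cast hn
  have hA : (0 : ℝ) < (n : ℝ) + lam := by linarith
  have hB : (0 : ℝ) < (n : ℝ) + 1 + lam := by linarith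
  have hC : (0 : ℝ) < 1 + lam := by linarith
  have hS : |∑ i, g i| ≤ (n : ℝ) * gstar := by
    calc |∑ i, g i| ≤ ∑ i, |g i| := Finset.abs_sum_le_sum_abs _ _
    _ ≤ ∑ _i : Fin n, gstar := Finset.sum_le_sum fun i _ => hg i
    _ = (n : ℝ) * gstar := by simp [mul_comm]
  have hgstar : 0 ≤ gstar := le_trans (abs_nonneg _) hgs
  rw [div_sub_div _ _ (ne_of_gt hA) (ne_of_gt hB), abs_div, abs_of_pos (mul_pos hA hB),
    div_le_div_iff₀ (mul_pos hA hB) hC]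
  obtain ⟨h1, h2⟩ := abs_le.mp hS
  obtain ⟨h3, h4⟩ := abs_le.mp hgs
  rcases abs_cases ((∑ i, g i) * ((n : ℝ) + 1 + lam) - ((n : ℝ) + lam) * ((∑ i, g i) + gs)) with
    ⟨he, _⟩ | ⟨he, _⟩ <;> rw [he] <;> nlinarith [sq_nonneg ((n:ℝ) - 1), mul_pos hA hB,
    mul_nonneg hlam hgstar, mul_nonneg (mul_nonneg hlam hlam) hgstar]
end

section
/- For n ≥ 1, λ ≥ 0 and g* ≥ 0, the function n ↦ |((n−1)²)/(n+λ+1) − n²/(n+λ)|·g*² is bounded above by 3g*² and tends to 3g*² as n → ∞. -/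
lemma gain_abs_eq (lam : ℝ) (hlam : 0 ≤ lam) (n : ℕ) (hn : 1 ≤ n) :
    |(((n : ℝ) - 1) ^ 2) / ((n : ℝ) + lam + 1) - ((n : ℝ) ^ 2) / ((n : ℝ) + lam)| =
      (((n : ℝ) + lam) * (2 * n - 1) + (n : ℝ) ^ 2) /
        (((n : ℝ) + lam) * ((n : ℝ) + lam + 1)) := by
  have hn1 : (1 : ℝ) ≤ (n : ℝ) := by exact_mod_cast hn
  have ha : (0 : ℝ) < (n : ℝ) + lam := by linarith
  have ha1 : (0 : ℝ) < (n : ℝ) + lam + 1 := by linarith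
  have hD : (((n : ℝ) - 1) ^ 2) / ((n : ℝ) + lam + 1) - ((n : ℝ) ^ 2) / ((n : ℝ) + lam)
      = -((((n : ℝ) + lam) * (2 * n - 1) + (n : ℝ) ^ 2) /
        (((n : ℝ) + lam) * ((n : ℝ) + lam + 1))) := by
    field_simp
    ring
  rw [hD, abs_neg, abs_of_nonneg]
  apply div_nonneg
  · nlinarith
  · positivity

/-- The gain-sensitivity bound `3 g*²` is asymptotically tight. -/
theorem gain_bound_tight (gstar lam : ℝ) (hg : 0 ≤ gstar) (hlam : 0 ≤ lam) :
    (∀ n : ℕ, 1 ≤ n →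
      |(((n : ℝ) - 1) ^ 2) / ((n : ℝ) + lam + 1) - ((n : ℝ) ^ 2) / ((n : ℝ) + lam)| *
        gstar ^ 2 ≤ 3 * gstar ^ 2) ∧
    Filter.Tendsto
      (fun n : ℕ =>
        |(((n : ℝ) - 1) ^ 2) / ((n : ℝ) + lam + 1) - ((n : ℝ) ^ 2) / ((n : ℝ) + lam)| *
          gstar ^ 2)
      Filter.atTop (nhds (3 * gstar ^ 2)) := by
  constructor
  · intro n hn
    have hn1 : (1 : ℝ) ≤ (n : ℝ) := by exact_mod_cast hn
    have ha : (0 : ℝ) < (n : ℝ) + lam := by linarith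
    have ha1 : (0 : ℝ) < (n : ℝ) + lam + 1 := by linarith
    rw [gain_abs_eq lam hlam n hn]
    have h3 : (((n : ℝ) + lam) * (2 * n - 1) + (n : ℝ) ^ 2) /
        (((n : ℝ) + lam) * ((n : ℝ) + lam + 1)) ≤ 3 := by
      rw [div_le_iff₀ (by positivity)]
      nlinarith
    have := sq_nonneg gstar
    nlinarith
  · -- limit
    set ε : ℕ → ℝ := fun n => ((4 * lam + 4) * n + (3 * lam ^ 2 + 4 * lam)) /
      (((n : ℝ) + lam) * ((n : ℝ) + lam + 1)) with hε
    have hkey : ∀ n : ℕ, 1 ≤ n →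
        |(((n : ℝ) - 1) ^ 2) / ((n : ℝ) + lam + 1) - ((n : ℝ) ^ 2) / ((n : ℝ) + lam)| *
          gstar ^ 2 = (3 - ε n) * gstar ^ 2 := by
      intro n hn
      have hn1 : (1 : ℝ) ≤ (n : ℝ) := by exact_mod_cast hn
      have ha : (0 : ℝ) < (n : ℝ) + lam := by linarith
      have ha1 : (0 : ℝ) < (n : ℝ) + lam + 1 := by linarith
      rw [gain_abs_eq lam hlam n hn, hε]
      congr 1
      field_simp
      ring
    have hε0 : Filter.Tendsto ε Filter.atTop (nhds 0) := by
      have hub : ∀ᶠ n : ℕ in Filter.atTop, ε n ≤ (3 * lam ^ 2 + 8 * lam + 4) / n := by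
        filter_upwards [Filter.eventually_atTop.2 ⟨1, fun n hn => hn⟩] with n hn
        have hn1 : (1 : ℝ) ≤ (n : ℝ) := by exact_mod_cast hn
        have ha : (0 : ℝ) < (n : ℝ) + lam := by linarith
        have ha1 : (0 : ℝ) < (n : ℝ) + lam + 1 := by linarith
        rw [hε, div_le_div_iff₀ (by positivity) (by linarith)]
        have h1 : (0:ℝ) ≤ (n:ℝ) * ((n:ℝ) - 1) := mul_nonneg (by linarith) (by linarith)
        nlinarith [mul_nonneg (sq_nonneg lam) h1, mul_nonneg hlam h1, sq_nonneg lam,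
          mul_nonneg hlam hlam, mul_nonneg (mul_nonneg hlam hlam) hlam,
          mul_nonneg hlam (le_trans zero_le_one hn1), mul_nonneg hlam (by linarith : (0:ℝ) ≤ (n:ℝ))]
      have hlb : ∀ᶠ n : ℕ in Filter.atTop, 0 ≤ ε n := by
        filter_upwards [Filter.eventually_atTop.2 ⟨1, fun n hn => hn⟩] with n hn
        have hn1 : (1 : ℝ) ≤ (n : ℝ) := by exact_mod_cast hn
        apply div_nonneg
        · nlinarith
        · nlinarith
      have hC : Filter.Tendsto (fun n : ℕ => (3 * lam ^ 2 + 8 * lam + 4) / (n : ℝ))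
          Filter.atTop (nhds 0) := tendsto_const_div_atTop_nhds_zero_nat _
      exact squeeze_zero' hlb hub hC
    have hlim : Filter.Tendsto (fun n : ℕ => (3 - ε n) * gstar ^ 2)
        Filter.atTop (nhds (3 * gstar ^ 2)) := by
      have h := ((tendsto_const_nhds (x := (3:ℝ)) (f := (Filter.atTop : Filter ℕ))).sub hε0).mul_const (gstar ^ 2)
      simpa using h
    refine hlim.congr' ?_
    filter_upwards [Filter.eventually_atTop.2 ⟨1, fun n hn => hn⟩] with n hn
    exact (hkey n hn).symm
end
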